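/- Let A B C D be points of the Euclidean plane (EuclideanSpace ℝ (Fin 2)) such that B and D lie strictly on opposite sides of the line through A and C ((affineSpan ℝ {A, C}).SOppSide B D) and A and C lie strictly on opposite sides of the line through B and D ((affineSpan ℝ {B, D}).SOppSide A C). Then ∠ D A B + ∠ A B C + ∠ B C D + ∠ C D A = 2 * π. -/

import Mathlib

open Real EuclideanGeometry

/-- If `E` lies strictly between `B` and `D`, and `A` is distinct from `B`, `D`, `E`,
then the angle `∠ B A D` splits as `∠ B A E + ∠ E A D`. -/
lemma angle_split_of_sbtw {V P : Type*} [NormedAddCommGroup V] [InnerProductSpace ℝ V]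
    [MetricSpace P] [NormedAddTorsor V P] {A B E D : P} (hE : Sbtw ℝ B E D)
    (hAB : A ≠ B) (hAD : A ≠ D) (hAE : A ≠ E) :
    ∠ B A D = ∠ B A E + ∠ E A D := by
  have h1 := EuclideanGeometry.angle_add_angle_add_angle_eq_pi (p₁ := A) (p₂ := B) (p₃ := E)
    hAB.symm
  have h2 := EuclideanGeometry.angle_add_angle_add_angle_eq_pi (p₁ := A) (p₂ := E) (p₃ := D)
    hAE.symm
  have h3 := EuclideanGeometry.angle_add_angle_add_angle_eq_pi (p₁ := A) (p₂ := B) (p₃ := D)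
    hAB.symm
  have h4 := EuclideanGeometry.angle_add_angle_eq_pi_of_angle_eq_pi A hE.angle₁₂₃_eq_pi
  have h5 := EuclideanGeometry.angle_eq_angle_of_angle_eq_pi A hE.angle₁₂₃_eq_pi
  have h6 := EuclideanGeometry.angle_eq_angle_of_angle_eq_pi A hE.angle₃₂₁_eq_pi
  have c1 : ∠ B E A = ∠ A E B := EuclideanGeometry.angle_comm _ _ _
  have c2 : ∠ E D A = ∠ A D E := EuclideanGeometry.angle_comm _ _ _
  have c3 : ∠ B D A = ∠ A D B := EuclideanGeometry.angle_comm _ _ _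
  have c4 : ∠ E A B = ∠ B A E := EuclideanGeometry.angle_comm _ _ _
  have c5 : ∠ D A E = ∠ E A D := EuclideanGeometry.angle_comm _ _ _
  have c6 : ∠ D A B = ∠ B A D := EuclideanGeometry.angle_comm _ _ _
  linarith

theorem convex_quadrilateral_angle_sum
    (A B C D : EuclideanSpace ℝ (Fin 2))
    (hAC : (affineSpan ℝ {A, C}).SOppSide B D)
    (hBD : (affineSpan ℝ {B, D}).SOppSide A C) :
    ∠ D A B + ∠ A B C + ∠ B C D + ∠ C D A = 2 * π := by
  obtain ⟨E, hE1, hEBD⟩ := hAC.exists_sbtw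
  obtain ⟨F, hF2, hFAC⟩ := hBD.exists_sbtw
  have hAL2 : A ∉ affineSpan ℝ ({B, D} : Set _) := hBD.2.1
  have hCL2 : C ∉ affineSpan ℝ ({B, D} : Set _) := hBD.2.2
  have hBL1 : B ∉ affineSpan ℝ ({A, C} : Set _) := hAC.2.1
  have hDL1 : D ∉ affineSpan ℝ ({A, C} : Set _) := hAC.2.2
  have hEL2 : E ∈ affineSpan ℝ ({B, D} : Set _) := hEBD.wbtw.mem_affineSpan
  have hFL1 : F ∈ affineSpan ℝ ({A, C} : Set _) := hFAC.wbtw.mem_affineSpan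
  -- the intersection points coincide
  have hEF : E = F := by
    by_contra h
    have hc : Collinear ℝ ({E, F, A, C} : Set _) :=
      collinear_insert_insert_of_mem_affineSpan_pair hE1 hFL1
    have hA : A ∈ affineSpan ℝ ({E, F} : Set _) :=
      hc.mem_affineSpan_of_mem_of_ne (by simp) (by simp) (by simp) h
    have hle : affineSpan ℝ ({E, F} : Set _) ≤ affineSpan ℝ ({B, D} : Set _) := by
      apply affineSpan_le.2
      rintro x (rfl | rfl)
      · exact hEL2
      · exact hF2
    exact hAL2 (hle hA)
  subst hEF
  -- nondegeneracies
  have hAB : A ≠ B := fun h => hAL2 (h ▸ left_mem_affineSpan_pair ℝ B D)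
  have hAD : A ≠ D := fun h => hAL2 (h ▸ right_mem_affineSpan_pair ℝ B D)
  have hAE : A ≠ E := fun h => hAL2 (h ▸ hEL2)
  have hCB : C ≠ B := fun h => hCL2 (h ▸ left_mem_affineSpan_pair ℝ B D)
  have hCD : C ≠ D := fun h => hCL2 (h ▸ right_mem_affineSpan_pair ℝ B D)
  have hCE : C ≠ E := fun h => hCL2 (h ▸ hEL2)
  have hBA : B ≠ A := fun h => hBL1 (h ▸ left_mem_affineSpan_pair ℝ A C)
  have hBC : B ≠ C := fun h => hBL1 (h ▸ right_mem_affineSpan_pair ℝ A C)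
  have hBE : B ≠ E := fun h => hBL1 (h ▸ hE1)
  have hDA : D ≠ A := fun h => hDL1 (h ▸ left_mem_affineSpan_pair ℝ A C)
  have hDC : D ≠ C := fun h => hDL1 (h ▸ right_mem_affineSpan_pair ℝ A C)
  have hDE : D ≠ E := fun h => hDL1 (h ▸ hE1)
  -- split the four corner angles through E
  have sA : ∠ B A D = ∠ B A E + ∠ E A D := angle_split_of_sbtw hEBD hAB hAD hAE
  have sC : ∠ B C D = ∠ B C E + ∠ E C D := angle_split_of_sbtw hEBD hCB hCD hCE
  have sB : ∠ A B C = ∠ A B E + ∠ E B C := angle_split_of_sbtw hFAC hBA hBC hBE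
  have sD : ∠ A D C = ∠ A D E + ∠ E D C := angle_split_of_sbtw hFAC hDA hDC hDE
  -- triangle angle sums
  have t1 := EuclideanGeometry.angle_add_angle_add_angle_eq_pi (p₁ := E) (p₂ := A) (p₃ := B)
    hAE
  have t2 := EuclideanGeometry.angle_add_angle_add_angle_eq_pi (p₁ := E) (p₂ := B) (p₃ := C)
    hBE
  have t3 := EuclideanGeometry.angle_add_angle_add_angle_eq_pi (p₁ := E) (p₂ := C) (p₃ := D)
    hCE
  have t4 := EuclideanGeometry.angle_add_angle_add_angle_eq_pi (p₁ := E) (p₂ := D) (p₃ := A)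
    hDE
  -- angles at E
  have e1 := EuclideanGeometry.angle_add_angle_eq_pi_of_angle_eq_pi B hFAC.angle₁₂₃_eq_pi
  have e2 := EuclideanGeometry.angle_add_angle_eq_pi_of_angle_eq_pi D hFAC.angle₁₂₃_eq_pi
  -- commutativity normalizations
  have c1 : ∠ D A B = ∠ B A D := EuclideanGeometry.angle_comm _ _ _
  have c2 : ∠ C D A = ∠ A D C := EuclideanGeometry.angle_comm _ _ _
  have c3 : ∠ E A B = ∠ B A E := EuclideanGeometry.angle_comm _ _ _
  have c4 : ∠ D A E = ∠ E A D := EuclideanGeometry.angle_comm _ _ _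
  have c5 : ∠ E D C = ∠ C D E := EuclideanGeometry.angle_comm _ _ _
  have c6 : ∠ E D A = ∠ A D E := EuclideanGeometry.angle_comm _ _ _
  have c7 : ∠ E C D = ∠ D C E := EuclideanGeometry.angle_comm _ _ _
  have c8 : ∠ C D E = ∠ E D C := EuclideanGeometry.angle_comm _ _ _
  have c9 : ∠ B E A = ∠ B E A := rfl
  have c10 : ∠ C E B = ∠ B E C := EuclideanGeometry.angle_comm _ _ _
  have c11 : ∠ A E D = ∠ D E A := EuclideanGeometry.angle_comm _ _ _
  have c12 : ∠ E C D = ∠ D C E := EuclideanGeometry.angle_comm _ _ _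
  linarith
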